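/- For λ ≥ 0 and r > 1, the integrand bound [1 − y² + 2λ(y−1)/η_λ(r) + (2 log y)/η_λ(r)²]^{−1/2} ≥ (r² − y²)^{−1/2} holds for all y ∈ (1,r), and consequently Θ_λ(r) := ∫₁^r [1 − y² + 2λ(y−1)/η_λ(r) + (2 log y)/η_λ(r)²]^{−1/2} dy ≥ arcsec(r). -/

import Mathlib

open intervalIntegral MeasureTheory

private lemma theta_aux_key (lam r : ℝ) (hlam : 0 ≤ lam) (hr : 1 < r) :
    0 < lam / (r + 1) + Real.sqrt (lam ^ 2 / (r + 1) ^ 2 + 2 * Real.log r / (r ^ 2 - 1)) ∧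
    2*lam*(r-1)*(lam / (r + 1) + Real.sqrt (lam ^ 2 / (r + 1) ^ 2 + 2 * Real.log r / (r ^ 2 - 1)))
      + 2*Real.log r =
    (r^2-1)*(lam / (r + 1) + Real.sqrt (lam ^ 2 / (r + 1) ^ 2 + 2 * Real.log r / (r ^ 2 - 1)))^2 := by
  have hr0 : (0:ℝ) < r := by linarith
  have hr2 : (0:ℝ) < r ^ 2 - 1 := by nlinarith
  have hlogr : 0 < Real.log r := Real.log_pos hr
  set s : ℝ := Real.sqrt (lam ^ 2 / (r + 1) ^ 2 + 2 * Real.log r / (r ^ 2 - 1)) with hsdef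
  have harg : 0 ≤ lam ^ 2 / (r + 1) ^ 2 + 2 * Real.log r / (r ^ 2 - 1) := by
    have h2 : 0 ≤ 2 * Real.log r / (r ^ 2 - 1) := by positivity
    positivity
  have hs2 : s ^ 2 = lam ^ 2 / (r + 1) ^ 2 + 2 * Real.log r / (r ^ 2 - 1) := Real.sq_sqrt harg
  have hs_pos : 0 < s := Real.sqrt_pos.2 (by positivity)
  constructor
  · exact add_pos_of_nonneg_of_pos (div_nonneg hlam (by linarith)) hs_pos
  · field_simp at hs2 ⊢
    nlinarith [hs2]

set_option maxHeartbeats 1000000 in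
/-- The integrand of the semi-period Θ_λ(r) is bounded below by that of arcsec, and
consequently Θ_λ(r) ≥ arcsec(r) = arccos(1/r). -/
theorem theta_ge_arcsec (lam r : ℝ) (hlam : 0 ≤ lam) (hr : 1 < r) :
    let η : ℝ := lam / (r + 1) +
      Real.sqrt (lam ^ 2 / (r + 1) ^ 2 + 2 * Real.log r / (r ^ 2 - 1))
    (∀ y ∈ Set.Ioo (1 : ℝ) r,
        (1 - y ^ 2 + 2 * lam * (y - 1) / η + 2 * Real.log y / η ^ 2) ^ (-(1:ℝ)/2) ≥
          (r ^ 2 - y ^ 2) ^ (-(1:ℝ)/2)) ∧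
    (∫ y in (1:ℝ)..r,
        (1 - y ^ 2 + 2 * lam * (y - 1) / η + 2 * Real.log y / η ^ 2) ^ (-(1:ℝ)/2)) ≥
      Real.arccos (1 / r) := by
  intro η
  have hr0 : (0:ℝ) < r := by linarith
  have hr2 : (0:ℝ) < r ^ 2 - 1 := by nlinarith
  have hlogr : 0 < Real.log r := Real.log_pos hr
  have hη : 0 < η := (theta_aux_key lam r hlam hr).1
  have hkeyp : 2*lam*(r-1)*η + 2*Real.log r = (r^2-1)*η^2 := (theta_aux_key lam r hlam hr).2
  clear_value η
  have hkey : 2*lam*(r-1)/η + 2*Real.log r/η^2 = r^2-1 := by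
    field_simp
    linear_combination hkeyp
  -- chord inequality for log
  have hlog_chord : ∀ y ∈ Set.Icc (1:ℝ) r, (y-1)*Real.log r ≤ (r-1)*Real.log y := by
    intro y hy
    obtain ⟨hy1, hyr⟩ := hy
    have hr1 : (0:ℝ) < r - 1 := by linarith
    have hr1' : r - (1:ℝ) ≠ 0 := by linarith
    have hcc := strictConcaveOn_log_Ioi.concaveOn.2 (Set.mem_Ioi.2 one_pos)
      (Set.mem_Ioi.2 hr0) (show (0:ℝ) ≤ (r-y)/(r-1) from div_nonneg (by linarith) hr1.le)
      (show (0:ℝ) ≤ (y-1)/(r-1) from div_nonneg (by linarith) hr1.le)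
      (show (r-y)/(r-1) + (y-1)/(r-1) = 1 by field_simp [hr1']; ring)
    have hpt : ((r-y)/(r-1)) • (1:ℝ) + ((y-1)/(r-1)) • r = y := by
      simp only [smul_eq_mul]
      field_simp [hr1']
      ring
    rw [hpt, Real.log_one, smul_eq_mul, smul_eq_mul, mul_zero, zero_add] at hcc
    have h1 : (y-1)/(r-1) * Real.log r ≤ Real.log y := hcc
    calc (y-1)*Real.log r = ((y-1)/(r-1) * Real.log r) * (r-1) := by field_simp
      _ ≤ Real.log y * (r-1) := mul_le_mul_of_nonneg_right h1 hr1.le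
      _ = (r-1)*Real.log y := by ring
  -- lower bound on the base
  have hlb : ∀ y ∈ Set.Icc (1:ℝ) r,
      (y-1)*(r-y) ≤ 1 - y ^ 2 + 2 * lam * (y - 1) / η + 2 * Real.log y / η ^ 2 := by
    intro y hy
    have hc := hlog_chord y hy
    have e : (1 - y ^ 2 + 2 * lam * (y - 1) / η + 2 * Real.log y / η ^ 2) - (y-1)*(r-y)
        = 2*((r-1)*Real.log y - (y-1)*Real.log r)/(η^2*(r-1)) := by
      have hr1 : (0:ℝ) < r - 1 := by linarith
      field_simp
      linear_combination (y-1)*hkeyp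
    nlinarith [div_nonneg (by linarith : (0:ℝ) ≤ 2*((r-1)*Real.log y - (y-1)*Real.log r))
      (mul_nonneg (pow_two_nonneg η) (by linarith : (0:ℝ) ≤ r-1))]
  -- upper bound on the base
  have hub : ∀ y ∈ Set.Icc (1:ℝ) r,
      1 - y ^ 2 + 2 * lam * (y - 1) / η + 2 * Real.log y / η ^ 2 ≤ r^2 - y^2 := by
    intro y hy
    obtain ⟨hy1, hyr⟩ := hy
    have h1 : 2*lam*(y-1)/η ≤ 2*lam*(r-1)/η := by gcongr <;> linarith
    have h2 : 2*Real.log y/η^2 ≤ 2*Real.log r/η^2 := by gcongr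
    linarith
  have hbr : 1 - r ^ 2 + 2 * lam * (r - 1) / η + 2 * Real.log r / η ^ 2 = 0 := by
    linarith [hkey]
  -- part 1 : pointwise inequality
  have part1 : ∀ y ∈ Set.Ioo (1 : ℝ) r,
      (1 - y ^ 2 + 2 * lam * (y - 1) / η + 2 * Real.log y / η ^ 2) ^ (-(1:ℝ)/2) ≥
        (r ^ 2 - y ^ 2) ^ (-(1:ℝ)/2) := by
    intro y hy
    obtain ⟨hy1, hyr⟩ := hy
    have hpos : 0 < 1 - y ^ 2 + 2 * lam * (y - 1) / η + 2 * Real.log y / η ^ 2 :=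
      lt_of_lt_of_le (by nlinarith) (hlb y ⟨hy1.le, hyr.le⟩)
    exact Real.rpow_le_rpow_of_nonpos hpos (hub y ⟨hy1.le, hyr.le⟩) (by norm_num)
  -- abbreviations
  set F : ℝ → ℝ := fun y =>
    (1 - y ^ 2 + 2 * lam * (y - 1) / η + 2 * Real.log y / η ^ 2) ^ (-(1:ℝ)/2) with hFdef
  set g : ℝ → ℝ := fun y => (r ^ 2 - y ^ 2) ^ (-(1:ℝ)/2) with hgdef
  set c : ℝ := ((r-1)/2) ^ (-(1:ℝ)/2) with hcdef
  have hc0 : 0 ≤ c := Real.rpow_nonneg (by linarith) _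
  set D : ℝ → ℝ := fun y => c * ((y-1) ^ (-(1:ℝ)/2) + (r-y) ^ (-(1:ℝ)/2)) with hDdef
  -- integrability of the dominating function
  have hI1 : IntervalIntegrable (fun y => (y-1:ℝ)^(-(1:ℝ)/2)) volume 1 r := by
    have h := (intervalIntegral.intervalIntegrable_rpow' (a := 0) (b := r-1)
      (r := -(1:ℝ)/2) (by norm_num)).comp_sub_right 1
    simpa using h
  have hI2 : IntervalIntegrable (fun y => (r-y:ℝ)^(-(1:ℝ)/2)) volume 1 r := by
    have h := (intervalIntegral.intervalIntegrable_rpow' (a := 0) (b := r-1)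
      (r := -(1:ℝ)/2) (by norm_num)).comp_sub_left r
    simpa using h.symm
  have hD_int : IntervalIntegrable D volume 1 r := (hI1.add hI2).const_mul c
  -- pointwise domination on Ioc
  have hFD : ∀ y ∈ Set.Ioc (1:ℝ) r, ‖F y‖ ≤ ‖D y‖ := by
    intro y hy
    obtain ⟨hy1, hyr⟩ := hy
    have hDy : 0 ≤ D y := by
      have := Real.rpow_nonneg (by linarith : (0:ℝ) ≤ y - 1) (-(1:ℝ)/2)
      have := Real.rpow_nonneg (by linarith : (0:ℝ) ≤ r - y) (-(1:ℝ)/2)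
      simp only [hDdef]
      positivity
    rcases eq_or_lt_of_le hyr with hyr' | hyr'
    · have hF0 : F y = 0 := by
        simp only [hFdef, hyr', hbr]
        exact Real.zero_rpow (by norm_num)
      rw [hF0, norm_zero]
      exact norm_nonneg _
    · have hbase_pos : 0 < 1 - y ^ 2 + 2 * lam * (y - 1) / η + 2 * Real.log y / η ^ 2 :=
        lt_of_lt_of_le (by nlinarith) (hlb y ⟨hy1.le, hyr⟩)
      have hFy : 0 ≤ F y := Real.rpow_nonneg hbase_pos.le _
      rw [Real.norm_eq_abs, Real.norm_eq_abs, abs_of_nonneg hFy, abs_of_nonneg hDy]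
      have key : F y ≤ D y := by
        rcases le_total y ((1+r)/2) with hmid | hmid
        · have h5 : (0:ℝ) < (r-1)/2 * (y-1) := by nlinarith
          have h6 : (r-1)/2 * (y-1) ≤
              1 - y ^ 2 + 2 * lam * (y - 1) / η + 2 * Real.log y / η ^ 2 := by
            nlinarith [hlb y ⟨hy1.le, hyr⟩]
          have h7 : F y ≤ ((r-1)/2 * (y-1)) ^ (-(1:ℝ)/2) :=
            Real.rpow_le_rpow_of_nonpos h5 h6 (by norm_num)
          have h8 : ((r-1)/2 * (y-1)) ^ (-(1:ℝ)/2) = c * (y-1) ^ (-(1:ℝ)/2) :=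
            Real.mul_rpow (by linarith) (by linarith)
          have h9 : (0:ℝ) ≤ (r-y) ^ (-(1:ℝ)/2) := Real.rpow_nonneg (by linarith) _
          have h10 : c * (y-1) ^ (-(1:ℝ)/2) ≤ D y := by
            simp only [hDdef]
            rw [mul_add]
            linarith [mul_nonneg hc0 h9]
          calc F y ≤ ((r-1)/2 * (y-1)) ^ (-(1:ℝ)/2) := h7
            _ = c * (y-1) ^ (-(1:ℝ)/2) := h8
            _ ≤ D y := h10
        · have h5 : (0:ℝ) < (r-1)/2 * (r-y) := by nlinarith
          have h6 : (r-1)/2 * (r-y) ≤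
              1 - y ^ 2 + 2 * lam * (y - 1) / η + 2 * Real.log y / η ^ 2 := by
            nlinarith [hlb y ⟨hy1.le, hyr⟩]
          have h7 : F y ≤ ((r-1)/2 * (r-y)) ^ (-(1:ℝ)/2) :=
            Real.rpow_le_rpow_of_nonpos h5 h6 (by norm_num)
          have h8 : ((r-1)/2 * (r-y)) ^ (-(1:ℝ)/2) = c * (r-y) ^ (-(1:ℝ)/2) :=
            Real.mul_rpow (by linarith) (by linarith)
          have h9 : (0:ℝ) ≤ (y-1) ^ (-(1:ℝ)/2) := Real.rpow_nonneg (by linarith) _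
          have h10 : c * (r-y) ^ (-(1:ℝ)/2) ≤ D y := by
            simp only [hDdef]
            rw [mul_add]
            linarith [mul_nonneg hc0 h9]
          calc F y ≤ ((r-1)/2 * (r-y)) ^ (-(1:ℝ)/2) := h7
            _ = c * (r-y) ^ (-(1:ℝ)/2) := h8
            _ ≤ D y := h10
      exact key
  have hFmeas : AEStronglyMeasurable F (volume.restrict (Set.uIoc (1:ℝ) r)) := by
    apply Measurable.aestronglyMeasurable
    apply Measurable.pow _ measurable_const
    exact ((measurable_const.sub (measurable_id.pow_const 2)).add
      ((measurable_id.sub_const 1).const_mul (2*lam) |>.div_const η)).add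
      ((Real.measurable_log.const_mul 2).div_const (η^2))
  have hF_int : IntervalIntegrable F volume 1 r := by
    apply hD_int.mono_fun hFmeas
    exact (ae_restrict_mem measurableSet_uIoc).mono fun y hy => by
      show ‖F y‖ ≤ ‖D y‖
      rw [Set.uIoc_of_le hr.le] at hy
      exact hFD y hy
  -- g ≤ F on Ioc
  have hgleF : ∀ y ∈ Set.Ioc (1:ℝ) r, g y ≤ F y := by
    intro y hy
    obtain ⟨hy1, hyr⟩ := hy
    rcases eq_or_lt_of_le hyr with hyr' | hyr'
    · have hg0 : g y = 0 := by
        simp only [hgdef, hyr', sub_self]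
        exact Real.zero_rpow (by norm_num)
      rw [hg0]
      have : 0 ≤ 1 - y ^ 2 + 2 * lam * (y - 1) / η + 2 * Real.log y / η ^ 2 := by
        rw [hyr', hbr]
      exact Real.rpow_nonneg this _
    · exact part1 y ⟨hy1, hyr'⟩
  have hgmeas : AEStronglyMeasurable g (volume.restrict (Set.uIoc (1:ℝ) r)) := by
    apply Measurable.aestronglyMeasurable
    apply Measurable.pow _ measurable_const
    fun_prop
  have hg_int : IntervalIntegrable g volume 1 r := by
    apply hF_int.mono_fun hgmeas
    exact (ae_restrict_mem measurableSet_uIoc).mono fun y hy => by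
      show ‖g y‖ ≤ ‖F y‖
      rw [Set.uIoc_of_le hr.le] at hy
      obtain ⟨hy1, hyr⟩ := hy
      have hg0 : 0 ≤ g y := Real.rpow_nonneg (by nlinarith) _
      have hF0 : 0 ≤ F y := le_trans hg0 (hgleF y ⟨hy1, hyr⟩)
      rw [Real.norm_eq_abs, Real.norm_eq_abs, abs_of_nonneg hg0, abs_of_nonneg hF0]
      exact hgleF y ⟨hy1, hyr⟩
  -- the arcsec integral
  have harcsin : ∀ x ∈ Set.Ioo (1:ℝ) r,
      HasDerivAt (fun y => Real.arcsin (y/r)) (g x) x := by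
    intro x hx
    obtain ⟨hx1, hxr⟩ := hx
    have hxr0 : 0 < x := by linarith
    have h1 : x/r ≠ -1 := by
      have : 0 < x/r := div_pos hxr0 hr0
      linarith
    have h2 : x/r ≠ 1 := by
      have : x/r < 1 := (div_lt_one hr0).2 hxr
      linarith
    have hd := (Real.hasDerivAt_arcsin h1 h2).comp x ((hasDerivAt_id x).div_const r)
    have hpos : (0:ℝ) < r^2 - x^2 := by nlinarith
    have heq : (1 / Real.sqrt (1 - (x/r)^2)) * (1/r) = (r^2-x^2)^(-(1:ℝ)/2) := by
      have h3 : (1:ℝ) - (x/r)^2 = (r^2-x^2)/r^2 := by field_simp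
      have h4 : Real.sqrt ((r^2-x^2)/r^2) = Real.sqrt (r^2-x^2)/r := by
        rw [Real.sqrt_div hpos.le, Real.sqrt_sq hr0.le]
      have h5 : (0:ℝ) < Real.sqrt (r^2-x^2) := Real.sqrt_pos.2 hpos
      rw [h3, h4, show (-(1:ℝ)/2) = -(1/2:ℝ) by norm_num, Real.rpow_neg hpos.le,
        ← Real.sqrt_eq_rpow]
      field_simp
    simp only [hgdef]
    rw [← heq]
    simpa [Function.comp_def] using hd
  have hval : (∫ y in (1:ℝ)..r, g y) = Real.arccos (1/r) := by
    have hcont : ContinuousOn (fun y => Real.arcsin (y/r)) (Set.Icc 1 r) :=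
      (Real.continuous_arcsin.comp (continuous_id.div_const r)).continuousOn
    have hFTC := integral_eq_sub_of_hasDeriv_right_of_le hr.le hcont
      (fun x hx => (harcsin x hx).hasDerivWithinAt) hg_int
    rw [hFTC, div_self (ne_of_gt hr0), Real.arcsin_one,
      Real.arccos_eq_pi_div_two_sub_arcsin]
  -- conclusion
  refine ⟨part1, ?_⟩
  have hae : g ≤ᵐ[volume.restrict (Set.Icc (1:ℝ) r)] F := by
    have hres : (volume : Measure ℝ).restrict (Set.Icc (1:ℝ) r) =
        volume.restrict (Set.Ioc (1:ℝ) r) :=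
      (Measure.restrict_congr_set Ioc_ae_eq_Icc).symm
    rw [hres]
    exact (ae_restrict_mem measurableSet_Ioc).mono fun y hy => hgleF y hy
  have hmono := integral_mono_ae_restrict hr.le hg_int hF_int hae
  rw [ge_iff_le, ← hval]
  exact hmono
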